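/- Let M be a real symmetric positive semidefinite matrix with one-dimensional kernel spanned by v = [v₁; 0; v₃] where v₁ ∈ ℝ^{n₁} is strictly positive and v₃ ∈ ℝ^{n₃} is strictly negative. Then for every initial state x(0) with vᵀx(0) > 0, the limit x(∞) = lim exp(-tM)x(0) has all first-block components positive, all second-block components zero, and all third-block components negative (sign consensus). -/

import Mathlib

open Matrix Filter

theorem stmt15 (n₁ n₂ n₃ : ℕ)
    (M : Matrix (Fin n₁ ⊕ Fin n₂ ⊕ Fin n₃) (Fin n₁ ⊕ Fin n₂ ⊕ Fin n₃) ℝ)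
    (hM : M.IsSymm) (hPSD : M.PosSemidef)
    (v₁ : Fin n₁ → ℝ) (v₃ : Fin n₃ → ℝ)
    (hv₁ : ∀ i, 0 < v₁ i) (hv₃ : ∀ i, v₃ i < 0)
    (v : Fin n₁ ⊕ Fin n₂ ⊕ Fin n₃ → ℝ)
    (hv : v = Sum.elim v₁ (Sum.elim (0 : Fin n₂ → ℝ) v₃))
    (hker : ∀ x, M *ᵥ x = 0 ↔ ∃ c : ℝ, x = c • v)
    (x0 : Fin n₁ ⊕ Fin n₂ ⊕ Fin n₃ → ℝ) (hx0 : 0 < v ⬝ᵥ x0) :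
    ∃ L : Fin n₁ ⊕ Fin n₂ ⊕ Fin n₃ → ℝ,
      Tendsto (fun t : ℝ => (NormedSpace.exp (-(t • M))) *ᵥ x0) atTop (nhds L) ∧
      L = ((v ⬝ᵥ x0) / (v ⬝ᵥ v)) • v ∧
      (∀ p, 0 < L (Sum.inl p)) ∧
      (∀ p, L (Sum.inr (Sum.inl p)) = 0) ∧
      (∀ p, L (Sum.inr (Sum.inr p)) < 0) := by
  classical
  have hH : M.IsHermitian := hPSD.1
  set B : Matrix (Fin n₁ ⊕ Fin n₂ ⊕ Fin n₃) (Fin n₁ ⊕ Fin n₂ ⊕ Fin n₃) ℝ :=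
    (hH.eigenvectorUnitary : Matrix (Fin n₁ ⊕ Fin n₂ ⊕ Fin n₃) (Fin n₁ ⊕ Fin n₂ ⊕ Fin n₃) ℝ)
    with hBdef
  set lam : _ → ℝ := hH.eigenvalues with hlamdef
  have hstarB : star B * B = 1 := Unitary.coe_star_mul_self hH.eigenvectorUnitary
  have hBstar : B * star B = 1 := Unitary.coe_mul_star_self hH.eigenvectorUnitary
  have hBinv : B⁻¹ = star B := Matrix.inv_eq_left_inv hstarB
  have hspec : M = B * diagonal lam * star B := by
    have := hH.spectral_theorem
    simpa [Function.comp] using this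
  -- basic facts about v
  have hMv : M *ᵥ v = 0 := (hker v).2 ⟨1, (one_smul _ _).symm⟩
  have hvne : v ≠ 0 := by
    intro h
    rw [h, zero_dotProduct] at hx0
    exact lt_irrefl _ hx0
  have hvv : 0 < v ⬝ᵥ v := by
    have h0 : 0 ≤ v ⬝ᵥ v := Finset.sum_nonneg fun i _ => mul_self_nonneg _
    rcases lt_or_eq_of_le h0 with h | h
    · exact h
    · exact absurd (dotProduct_self_eq_zero.1 h.symm) hvne
  have hdot : ∀ a b : ℝ, (a • v) ⬝ᵥ (b • v) = a * b * (v ⬝ᵥ v) := by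
    intro a b
    rw [smul_dotProduct, dotProduct_smul, smul_eq_mul, smul_eq_mul]
    ring
  -- columns of B
  set u : _ → _ → ℝ := fun i => ⇑(hH.eigenvectorBasis i) with hudef
  have hBu : ∀ j i, B j i = u i j := fun j i => rfl
  have hMu : ∀ i, M *ᵥ u i = lam i • u i := fun i => hH.mulVec_eigenvectorBasis i
  have horth : ∀ i i', u i ⬝ᵥ u i' = if i = i' then 1 else 0 := by
    intro i i'
    have := congrFun (congrFun hstarB i) i'
    simpa [Matrix.mul_apply, Matrix.one_apply, Matrix.star_apply, dotProduct,
      hBu] using this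
  have hlam_nonneg : ∀ i, 0 ≤ lam i := fun i => hPSD.eigenvalues_nonneg i
  -- existence of a zero eigenvalue
  set y : _ → ℝ := star B *ᵥ v with hydef
  have hBy : B *ᵥ y = v := by
    rw [hydef, Matrix.mulVec_mulVec, hBstar, Matrix.one_mulVec]
  have hyne : y ≠ 0 := by
    intro h
    apply hvne
    rw [← hBy, h, Matrix.mulVec_zero]
  have hdiagy : diagonal lam *ᵥ y = 0 := by
    have h1 : M *ᵥ v = B *ᵥ (diagonal lam *ᵥ y) := by
      rw [hspec, ← Matrix.mulVec_mulVec, ← Matrix.mulVec_mulVec]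
    have h2 : B *ᵥ (diagonal lam *ᵥ y) = 0 := by rw [← h1, hMv]
    have h3 := congrArg (fun z => star B *ᵥ z) h2
    simpa only [Matrix.mulVec_mulVec, ← Matrix.mul_assoc, hstarB, Matrix.one_mul,
      Matrix.mulVec_zero] using h3
  obtain ⟨i₀, hyi₀⟩ : ∃ i, y i ≠ 0 := by
    by_contra h
    push_neg at h
    exact hyne (funext h)
  have hlam0 : lam i₀ = 0 := by
    have := congrFun hdiagy i₀
    simp only [Matrix.mulVec_diagonal, Pi.zero_apply, mul_eq_zero] at this
    rcases this with h | h
    · exact h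
    · exact absurd h hyi₀
  -- each zero-eigenvalue column is a multiple of v
  have hcol : ∀ i, lam i = 0 → ∃ c : ℝ, u i = c • v := by
    intro i hi
    apply (hker (u i)).1
    rw [hMu i, hi, zero_smul]
  have hsq : ∀ i c, u i = c • v → c * c * (v ⬝ᵥ v) = 1 := by
    intro i c hc
    have := horth i i
    rw [hc, hdot, if_pos rfl] at this
    exact this
  -- uniqueness of the zero eigenvalue index
  have huniq : ∀ i, lam i = 0 → i = i₀ := by
    intro i hi
    by_contra hne
    obtain ⟨c, hc⟩ := hcol i hi
    obtain ⟨c', hc'⟩ := hcol i₀ hlam0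
    have h1 := hsq i c hc
    have h2 := hsq i₀ c' hc'
    have h3 : c * c' * (v ⬝ᵥ v) = 0 := by
      have := horth i i₀
      rw [hc, hc', hdot, if_neg hne] at this
      exact this
    have hcne : c ≠ 0 := by intro h; rw [h] at h1; simp at h1
    have hc'ne : c' ≠ 0 := by intro h; rw [h] at h2; simp at h2
    exact mul_ne_zero (mul_ne_zero hcne hc'ne) (ne_of_gt hvv) h3
  -- the limit vector
  set w : _ → ℝ := star B *ᵥ x0 with hwdef
  have hw : ∀ i, w i = u i ⬝ᵥ x0 := by
    intro i
    simp [hwdef, Matrix.mulVec, dotProduct, Matrix.star_apply, hBu]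
  set L : _ → ℝ := fun j => ∑ i, B j i * ((if lam i = 0 then (1:ℝ) else 0) * w i) with hLdef
  -- exponential formula
  have hexp : ∀ t : ℝ, NormedSpace.exp (-(t • M))
      = B * diagonal (fun i => Real.exp (-(t * lam i))) * star B := by
    intro t
    have h2 : diagonal (fun i => -(t * lam i)) = -(t • diagonal lam) := by
      rw [← Matrix.diagonal_smul, ← Matrix.diagonal_neg]
      rfl
    have h1 : -(t • M) = B * diagonal (fun i => -(t * lam i)) * B⁻¹ := by
      rw [hBinv, hspec, h2]
      simp only [Matrix.mul_neg, Matrix.neg_mul, Matrix.mul_smul, Matrix.smul_mul,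
        Matrix.mul_assoc]
    rw [h1, Matrix.exp_conj B _ ⟨⟨B, star B, hBstar, hstarB⟩, rfl⟩,
      Matrix.exp_diagonal, hBinv]
    congr 2
    rw [Pi.exp_def]
    funext i
    rw [← Real.exp_eq_exp_ℝ]
  -- identify L
  obtain ⟨c, hc⟩ := hcol i₀ hlam0
  have hc2 := hsq i₀ c hc
  have hcc : (v ⬝ᵥ x0) / (v ⬝ᵥ v) = (v ⬝ᵥ x0) * (c * c) := by
    rw [div_eq_iff (ne_of_gt hvv)]
    nlinarith [hc2]
  have hLv : L = ((v ⬝ᵥ x0) / (v ⬝ᵥ v)) • v := by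
    funext j
    rw [hLdef]
    simp only
    rw [Finset.sum_eq_single i₀]
    · rw [if_pos hlam0, one_mul, hw, hBu, hc]
      simp only [Pi.smul_apply, smul_eq_mul, smul_dotProduct]
      rw [hcc]
      ring
    · intro i _ hne
      rw [if_neg (fun h => hne (huniq i h)), zero_mul, mul_zero]
    · intro h
      exact absurd (Finset.mem_univ _) h
  -- convergence
  have htends : Tendsto (fun t : ℝ => (NormedSpace.exp (-(t • M))) *ᵥ x0) atTop (nhds L) := by
    rw [tendsto_pi_nhds]
    intro j
    have hfun : ∀ t : ℝ, (NormedSpace.exp (-(t • M)) *ᵥ x0) j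
        = ∑ i, B j i * (Real.exp (-(t * lam i)) * w i) := by
      intro t
      rw [hexp t, ← Matrix.mulVec_mulVec, ← Matrix.mulVec_mulVec, ← hwdef]
      have hd : diagonal (fun i => Real.exp (-(t * lam i))) *ᵥ w
          = fun i => Real.exp (-(t * lam i)) * w i :=
        funext fun i => Matrix.mulVec_diagonal _ _ _
      rw [hd]
      rfl
    simp only [hfun, hLdef]
    apply tendsto_finset_sum
    intro i _
    rcases eq_or_ne (lam i) 0 with h0 | h0
    · simp only [h0, mul_zero, neg_zero, Real.exp_zero, if_pos]
      exact tendsto_const_nhds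
    · rw [if_neg h0]
      have hpos : 0 < lam i := lt_of_le_of_ne (hlam_nonneg i) (Ne.symm h0)
      have hexp0 : Tendsto (fun t : ℝ => Real.exp (-(t * lam i))) atTop (nhds 0) :=
        Real.tendsto_exp_atBot.comp
          (tendsto_neg_atTop_atBot.comp (tendsto_id.atTop_mul_const hpos))
      exact (hexp0.mul_const (w i)).const_mul (B j i)
  have hvl : ∀ p, v (Sum.inl p) = v₁ p := fun p => by rw [hv]; rfl
  have hvm : ∀ p, v (Sum.inr (Sum.inl p)) = 0 := fun p => by rw [hv]; rfl
  have hvr : ∀ p, v (Sum.inr (Sum.inr p)) = v₃ p := fun p => by rw [hv]; rfl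
  refine ⟨L, htends, hLv, ?_, ?_, ?_⟩
  · intro p
    rw [hLv]
    simp only [Pi.smul_apply, smul_eq_mul, hvl]
    exact mul_pos (div_pos hx0 hvv) (hv₁ p)
  · intro p
    rw [hLv]
    simp only [Pi.smul_apply, smul_eq_mul, hvm, mul_zero]
  · intro p
    rw [hLv]
    simp only [Pi.smul_apply, smul_eq_mul, hvr]
    exact mul_neg_of_pos_of_neg (div_pos hx0 hvv) (hv₃ p)
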